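/- Let δ > 0, k ∈ ℕ, and suppose Szemerédi's theorem holds with threshold N(δ,k). Let (X, 𝒳, μ) be a probability space and A₁, …, A_N ∈ 𝒳 with μ(Aᵢ) ≥ δ for all i. If N > N(δ,k), then there exist a, d ∈ ℕ with d ≥ 1 such that A_a ∩ A_{a+d} ∩ A_{a+2d} ∩ ⋯ ∩ A_{a+kd} ≠ ∅. -/
import Mathlib


open MeasureTheory
open scoped ENNReal

/-- From Szemerédi's theorem (finite form, with threshold `N₀ = N(δ,k)`):
given sets `A₁, …, A_N` of measure at least `δ` in a probability space, with
`N > N₀`, some subfamily indexed by an arithmetic progression of length `k+1`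
has nonempty intersection. -/
theorem progression_of_sets_in_probability_space
    (δ : ℝ) (hδ : 0 < δ) (k : ℕ) (N₀ : ℕ)
    (hSz : ∀ N : ℕ, N₀ < N → ∀ E : Finset ℕ, E ⊆ Finset.Icc 1 N →
      δ * N ≤ E.card →
      ∃ a d : ℕ, 1 ≤ d ∧ ∀ i : ℕ, i ≤ k → a + i * d ∈ E)
    {X : Type*} [MeasurableSpace X] (μ : Measure X) [IsProbabilityMeasure μ]
    (N : ℕ) (hN : N₀ < N)
    (A : ℕ → Set X) (hAmeas : ∀ i, MeasurableSet (A i))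
    (hAδ : ∀ i ∈ Finset.Icc 1 N, ENNReal.ofReal δ ≤ μ (A i)) :
    ∃ a d : ℕ, 1 ≤ d ∧
      (⋂ i ∈ Finset.range (k + 1), A (a + i * d)).Nonempty := by
  classical
  set E : X → Finset ℕ := fun x => (Finset.Icc 1 N).filter (fun i => x ∈ A i) with hE
  by_cases hx : ∃ x, δ * N ≤ (E x).card
  · obtain ⟨x, hxc⟩ := hx
    obtain ⟨a, d, hd, hmem⟩ := hSz N hN (E x) (Finset.filter_subset _ _) hxc
    refine ⟨a, d, hd, x, ?_⟩
    simp only [Set.mem_iInter]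
    intro i hi
    have := hmem i (by simpa [Nat.lt_succ_iff] using hi)
    exact (Finset.mem_filter.mp this).2
  · exfalso
    push_neg at hx
    have hNpos : (0:ℝ) < N := by
      have : 0 < N := Nat.pos_of_ne_zero (by omega)
      exact_mod_cast this
    have hr : (0:ℝ) < δ * N := mul_pos hδ hNpos
    have hfun : ∀ x, ((E x).card : ℝ≥0∞)
        = ∑ i ∈ Finset.Icc 1 N, Set.indicator (A i) 1 x := by
      intro x
      rw [hE]
      simp only [Set.indicator_apply, Pi.one_apply, Finset.card_filter]
      push_cast
      exact Finset.sum_congr rfl (fun i _ => by split <;> simp)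
    have hint : ∫⁻ x, ((E x).card : ℝ≥0∞) ∂μ = ∑ i ∈ Finset.Icc 1 N, μ (A i) := by
      simp_rw [hfun]
      rw [lintegral_finset_sum _ (fun i _ => measurable_one.indicator (hAmeas i))]
      refine Finset.sum_congr rfl (fun i _ => ?_)
      rw [lintegral_indicator_one (hAmeas i)]
    have hlow : ENNReal.ofReal (δ * N) ≤ ∑ i ∈ Finset.Icc 1 N, μ (A i) := by
      calc ENNReal.ofReal (δ * N) = ∑ _i ∈ Finset.Icc 1 N, ENNReal.ofReal δ := by
            rw [Finset.sum_const, Nat.card_Icc]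
            rw [ENNReal.ofReal_mul hδ.le, ENNReal.ofReal_natCast]
            simp [mul_comm]
        _ ≤ ∑ i ∈ Finset.Icc 1 N, μ (A i) := Finset.sum_le_sum hAδ
    set m : ℕ := ⌈δ * N⌉₊ - 1 with hm
    have hmlt : (m : ℝ) < δ * N := by
      have h1 : 1 ≤ ⌈δ * N⌉₊ := Nat.one_le_ceil_iff.mpr hr
      have : (m : ℝ) = (⌈δ * N⌉₊ : ℝ) - 1 := by
        rw [hm]; push_cast [h1]; ring
      rw [this]
      have := Nat.ceil_lt_add_one hr.le
      linarith
    have hcard : ∀ x, ((E x).card : ℝ≥0∞) ≤ (m : ℝ≥0∞) := by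
      intro x
      have h1 : ((E x).card : ℝ) < δ * N := hx x
      have h2 : (E x).card < ⌈δ * N⌉₊ := Nat.lt_ceil.mpr h1
      exact_mod_cast Nat.le_sub_one_of_lt h2
    have hup : ∫⁻ x, ((E x).card : ℝ≥0∞) ∂μ ≤ (m : ℝ≥0∞) := by
      calc ∫⁻ x, ((E x).card : ℝ≥0∞) ∂μ ≤ ∫⁻ _x, (m : ℝ≥0∞) ∂μ :=
            lintegral_mono hcard
        _ = (m : ℝ≥0∞) := by simp
    have : ENNReal.ofReal (δ * N) ≤ (m : ℝ≥0∞) := by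
      calc ENNReal.ofReal (δ * N) ≤ ∑ i ∈ Finset.Icc 1 N, μ (A i) := hlow
        _ = ∫⁻ x, ((E x).card : ℝ≥0∞) ∂μ := hint.symm
        _ ≤ (m : ℝ≥0∞) := hup
    have hcontra : (m : ℝ≥0∞) < ENNReal.ofReal (δ * N) := by
      rw [← ENNReal.ofReal_natCast m]
      exact ENNReal.ofReal_lt_ofReal_iff hr |>.mpr hmlt
    exact absurd this hcontra.not_ge
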